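/- arXiv:1102.4083 — 2 statements merged into one kernel-verified Lean document; each statement's English description precedes it below -/
import Mathlib

section
/- Let P be a special ample polytope and embed X into ℤ^I by ι(x)_i = ⟨x, α_i^∨⟩. If x, y ∈ X are such that ι(y) is obtained from ι(x) by playing the numbers game with a cutoff, then x ∈ Λ(P) if and only if y ∈ Λ(P). -/
open scoped BigOperators

variable {V : Type*} [NormedAddCommGroup V] [InnerProductSpace ℝ V]

/-- The pairing `⟨x, y^∨⟩ = 2(x,y)/(y,y)` of `x` with the coroot of `y`. -/
noncomputable def pairing (x y : V) : ℝ := 2 * (inner ℝ x y : ℝ) / (inner ℝ y y : ℝ)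

/-- An irreducible, reduced, crystallographic root system in a Euclidean space `V`. -/
structure RootSystemData (V : Type*) [NormedAddCommGroup V] [InnerProductSpace ℝ V] :
    Type _ where
  Δ : Set V
  finite : Δ.Finite
  nonzero : ∀ α ∈ Δ, α ≠ 0
  spanning : Submodule.span ℝ Δ = ⊤
  neg_mem : ∀ α ∈ Δ, -α ∈ Δ
  reduced : ∀ α ∈ Δ, ∀ c : ℝ, c • α ∈ Δ → c = 1 ∨ c = -1
  crystallographic : ∀ α ∈ Δ, ∀ β ∈ Δ, ∃ n : ℤ, pairing α β = n
  reflect_mem : ∀ α ∈ Δ, ∀ β ∈ Δ, β - pairing β α • α ∈ Δ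
  irreducible : ∀ s t : Set V, s ∪ t = Δ →
    (∀ α ∈ s, ∀ β ∈ t, (inner ℝ α β : ℝ) = 0) → s = ∅ ∨ t = ∅

variable {R : RootSystemData V}

/-- A base (system of simple roots) of the root system, corresponding to a Weyl chamber. -/
structure Base (R : RootSystemData V) where
  S : Finset V
  subset : ↑S ⊆ R.Δ
  indep : LinearIndependent ℝ ((↑) : {x : V // x ∈ S} → V)
  decomp : ∀ α ∈ R.Δ, ∃ c : V → ℤ, α = ∑ β ∈ S, (c β : ℝ) • β ∧
    ((∀ β ∈ S, 0 ≤ c β) ∨ (∀ β ∈ S, c β ≤ 0))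

/-- `x` is dominant with respect to the chamber given by the base `B`. -/
def IsDominant (B : Base R) (x : V) : Prop := ∀ α ∈ B.S, 0 ≤ pairing x α

/-- `β` is a positive root with respect to the base `B`. -/
def Base.IsPos (B : Base R) (β : V) : Prop :=
  β ∈ R.Δ ∧ ∃ c : V → ℕ, β = ∑ α ∈ B.S, (c α : ℝ) • α

/-- The dominance order: `y - x` is a nonnegative integer combination of simple roots. -/
def domLE (B : Base R) (x y : V) : Prop :=
  ∃ c : V → ℕ, y - x = ∑ α ∈ B.S, (c α : ℝ) • α

/-- `x` is a weight: its pairing with every coroot is an integer. -/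
def IsWeight (R : RootSystemData V) (x : V) : Prop :=
  ∀ α ∈ R.Δ, ∃ n : ℤ, pairing x α = n

/-- An ample (`T`-equivariant ample) polytope for the toric variety of the Weyl fan:
vertices `μ B` indexed by Weyl chambers (equivalently, bases `B`), such that vertices at
adjacent chambers differ by a positive integer multiple of the separating root. The chamber
adjacent to `B` across the wall of the simple root `α ∈ B.S` is the one whose base is the
reflection `s_α(B)`. -/
structure AmplePolytope (R : RootSystemData V) where
  μ : Base R → V
  weight : ∀ B : Base R, IsWeight R (μ B)
  ample : ∀ B B' : Base R, ∀ α ∈ B.S,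
    (∀ β : V, β ∈ B'.S ↔ ∃ γ ∈ B.S, β = γ - pairing γ α • α) →
    ∃ r : ℤ, 0 < r ∧ μ B - μ B' = (r : ℝ) • α

/-- The polytope `P` itself: the convex hull of its vertices. -/
noncomputable def AmplePolytope.carrier (P : AmplePolytope R) : Set V :=
  convexHull ℝ (Set.range P.μ)

/-- The root lattice `Y`. -/
def rootLattice (R : RootSystemData V) : AddSubgroup V := AddSubgroup.closure R.Δ

/-- `Λ(P)`: the lattice points of `P` lying in the coset `Y + μ_σ` of the root lattice. -/
noncomputable def latticePts (P : AmplePolytope R) : Set V :=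
  {x | x ∈ P.carrier ∧ ∀ B : Base R, x - P.μ B ∈ rootLattice R}

/-- The polytope is special: each vertex is dominant for its own chamber. -/
def IsSpecial (P : AmplePolytope R) : Prop := ∀ B : Base R, ∀ α ∈ B.S, 0 ≤ pairing (P.μ B) α

/-- One step of the numbers game: firing the vertex corresponding to the simple root `α`
replaces `x` by its reflection `x - ⟨x, α^∨⟩ α`. -/
noncomputable def fireRoot (x α : V) : V := x - pairing x α • α

/-- The result of playing the firing sequence `l` starting from `x`. -/
noncomputable def playRes (x : V) (l : List V) : V := l.foldl fireRoot x

/-- Legality of a firing sequence for the usual numbers game: each fired simple root has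
negative amplitude when fired. -/
def NGLegal (B : Base R) : V → List V → Prop
  | _, [] => True
  | x, α :: t => α ∈ B.S ∧ pairing x α < 0 ∧ NGLegal B (fireRoot x α) t

/-- A configuration is allowed in the numbers game with a cutoff: all amplitudes `≥ -1`. -/
def AllowedConf (B : Base R) (x : V) : Prop := ∀ α ∈ B.S, -1 ≤ pairing x α

/-- Legality for the numbers game with a cutoff: fired amplitudes are negative, and every
configuration along the way (including the first and last) is allowed. -/
def CutoffLegal (B : Base R) : V → List V → Prop
  | x, [] => AllowedConf B x
  | x, α :: t => AllowedConf B x ∧ α ∈ B.S ∧ pairing x α < 0 ∧ CutoffLegal B (fireRoot x α) t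

/-- `x` is winning for the numbers game with a cutoff. -/
def CutoffWinning (B : Base R) (x : V) : Prop :=
  ∃ l : List V, CutoffLegal B x l ∧ IsDominant B (playRes x l)

/-- The winning criterion: `⟨x, β^∨⟩ ≥ -1` for all positive roots `β`. -/
def WinningCrit (B : Base R) (x : V) : Prop := ∀ β : V, B.IsPos β → -1 ≤ pairing x β

/-- `α` is `P`-progressive for `x`: either `x` is dominant and `α` has minimum length among
simple roots with `x + α ⪯ μ`, or `⟨x, α^∨⟩ ≤ -1`. -/
def Progressive (B : Base R) (P : AmplePolytope R) (x α : V) : Prop :=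
  α ∈ B.S ∧
    ((IsDominant B x ∧ domLE B (x + α) (P.μ B) ∧
        ∀ β ∈ B.S, domLE B (x + β) (P.μ B) → ‖α‖ ≤ ‖β‖) ∨
      pairing x α ≤ -1)

section Aux

variable {V : Type*} [NormedAddCommGroup V] [InnerProductSpace ℝ V]

lemma rinner_self_pos {x : V} (h : x ≠ 0) : (0:ℝ) < inner ℝ x x :=
  lt_of_le_of_ne real_inner_self_nonneg (fun h0 => h (real_inner_self_nonpos.mp h0.ge))

lemma pairing_add_left (a b θ : V) : pairing (a + b) θ = pairing a θ + pairing b θ := by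
  unfold pairing
  rw [inner_add_left]; ring

lemma pairing_sub_left (a b θ : V) : pairing (a - b) θ = pairing a θ - pairing b θ := by
  unfold pairing
  rw [inner_sub_left]; ring

lemma pairing_smul_left (c : ℝ) (a θ : V) : pairing (c • a) θ = c * pairing a θ := by
  unfold pairing
  rw [real_inner_smul_left]; ring

lemma pairing_neg_right (v θ : V) : pairing v (-θ) = - pairing v θ := by
  unfold pairing
  rw [inner_neg_right, inner_neg_neg]; ring

lemma pairing_self {θ : V} (h : θ ≠ 0) : pairing θ θ = 2 := by
  unfold pairing
  have := rinner_self_pos h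
  field_simp

lemma pairing_sum_left (s : Finset V) (f : V → ℝ) (θ : V) :
    pairing (∑ β ∈ s, f β • β) θ = ∑ β ∈ s, f β * pairing β θ := by
  unfold pairing
  rw [sum_inner, Finset.mul_sum, Finset.sum_div]
  congr 1; ext β
  rw [real_inner_smul_left]; ring

lemma pairing_pos_flip {a b : V} (ha : a ≠ 0) (hb : b ≠ 0) (h : 0 < pairing a b) :
    0 < pairing b a := by
  have hbb := rinner_self_pos hb
  have haa := rinner_self_pos ha
  have hab : (0:ℝ) < inner ℝ a b := by
    by_contra hc
    push_neg at hc
    have : pairing a b ≤ 0 := by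
      unfold pairing
      apply div_nonpos_of_nonpos_of_nonneg <;> nlinarith
    linarith
  have hba : (0:ℝ) < inner ℝ b a := by rwa [real_inner_comm]
  unfold pairing
  positivity

lemma pairing_nonpos_flip {a b : V} (ha : a ≠ 0) (hb : b ≠ 0) (h : pairing a b ≤ 0) :
    pairing b a ≤ 0 := by
  by_contra hc
  push_neg at hc
  have := pairing_pos_flip hb ha hc
  linarith

end Aux
section Aux2

variable {V : Type*} [NormedAddCommGroup V] [InnerProductSpace ℝ V] {R : RootSystemData V}

lemma finset_indep_iff (S : Finset V) :
    LinearIndependent ℝ ((↑) : {x : V // x ∈ S} → V) ↔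
      ∀ f : V → ℝ, (∑ β ∈ S, f β • β = 0) → ∀ β ∈ S, f β = 0 := by
  classical
  rw [Fintype.linearIndependent_iff]
  constructor
  · intro h f hsum β hβ
    have : ∑ i : {x : V // x ∈ S}, f i • (i : V) = 0 := by
      rw [Finset.sum_coe_sort S (fun β => f β • β)]; exact hsum
    exact h (fun i => f i) this ⟨β, hβ⟩
  · intro h g hsum i
    set f : V → ℝ := fun v => if hv : v ∈ S then g ⟨v, hv⟩ else 0 with hf
    have hfg : ∀ i : {x : V // x ∈ S}, f i = g i := by
      intro i; simp [hf, i.2]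
    have hsum' : ∑ β ∈ S, f β • β = 0 := by
      rw [← Finset.sum_coe_sort S (fun β => f β • β)]
      rw [Finset.sum_congr rfl (fun i _ => by rw [hfg i])]
      simpa using hsum
    have := h f hsum' i i.2
    rwa [hfg i] at this

lemma coords_unique (C : Base R) {f g : V → ℝ}
    (h : ∑ β ∈ C.S, f β • β = ∑ β ∈ C.S, g β • β) : ∀ β ∈ C.S, f β = g β := by
  have h0 : ∑ β ∈ C.S, (f β - g β) • β = 0 := by
    rw [Finset.sum_congr rfl (fun β _ => sub_smul (f β) (g β) β), Finset.sum_sub_distrib, h,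
      sub_self]
  intro β hβ
  have := (finset_indep_iff C.S).mp C.indep _ h0 β hβ
  linarith

/-- reflection in the root θ -/
noncomputable def rf (θ v : V) : V := v - pairing v θ • θ

lemma rf_apply (θ v : V) : rf θ v = v - pairing v θ • θ := rfl

lemma rf_add (θ a b : V) : rf θ (a + b) = rf θ a + rf θ b := by
  simp only [rf, pairing_add_left, add_smul]; abel

lemma rf_smul (θ : V) (c : ℝ) (a : V) : rf θ (c • a) = c • rf θ a := by
  simp only [rf, pairing_smul_left, smul_sub, mul_smul]

lemma rf_self {θ : V} (h : θ ≠ 0) : rf θ θ = -θ := by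
  simp [rf, pairing_self h]; module

lemma pairing_rf_left {θ : V} (h : θ ≠ 0) (v : V) : pairing (rf θ v) θ = - pairing v θ := by
  rw [rf, pairing_sub_left, pairing_smul_left, pairing_self h]; ring

lemma rf_rf {θ : V} (h : θ ≠ 0) (v : V) : rf θ (rf θ v) = v := by
  rw [rf_apply θ (rf θ v), pairing_rf_left h, rf_apply]; module

lemma rf_inj {θ : V} (h : θ ≠ 0) : Function.Injective (rf θ) := by
  intro a b hab
  have := congrArg (rf θ) hab
  rwa [rf_rf h, rf_rf h] at this

lemma rf_sum (θ : V) (s : Finset V) (f : V → ℝ) :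
    rf θ (∑ β ∈ s, f β • β) = ∑ β ∈ s, f β • rf θ β := by
  classical
  induction s using Finset.induction with
  | empty => simp [rf, pairing, inner_zero_left]
  | insert a s hx ih =>
      rw [Finset.sum_insert hx, Finset.sum_insert hx, rf_add, ih, rf_smul]

lemma span_base (C : Base R) : Submodule.span ℝ (C.S : Set V) = ⊤ := by
  rw [← top_le_iff, ← R.spanning, Submodule.span_le]
  intro α hα
  obtain ⟨c, hc, -⟩ := C.decomp α hα
  rw [SetLike.mem_coe, hc]
  exact Submodule.sum_mem _ (fun β hβ =>
    Submodule.smul_mem _ _ (Submodule.subset_span hβ))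

set_option linter.unusedSectionVars false
variable [FiniteDimensional ℝ V]

noncomputable def baseBasis (C : Base R) : Module.Basis {x : V // x ∈ C.S} ℝ V :=
  Module.Basis.mk C.indep (by
    rw [show Set.range ((↑) : {x : V // x ∈ C.S} → V) = (C.S : Set V) from
      Subtype.range_coe, span_base C])

lemma card_base (C : Base R) : C.S.card = Module.finrank ℝ V := by
  rw [Module.finrank_eq_card_basis (baseBasis C), Fintype.card_coe]

noncomputable def phiC (C : Base R) : V →ₗ[ℝ] ℝ :=
  ∑ i : {x : V // x ∈ C.S}, (baseBasis C).coord i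

lemma phiC_base (C : Base R) {β : V} (hβ : β ∈ C.S) : phiC C β = 1 := by
  classical
  rw [phiC, LinearMap.sum_apply]
  have hb : β = baseBasis C ⟨β, hβ⟩ := by rw [baseBasis, Module.Basis.mk_apply]
  calc ∑ i : {x : V // x ∈ C.S}, (baseBasis C).coord i β
      = ∑ i : {x : V // x ∈ C.S}, if (⟨β, hβ⟩ : {x : V // x ∈ C.S}) = i then 1 else 0 := by
        apply Finset.sum_congr rfl
        intro i _
        rw [Module.Basis.coord_apply, show ((baseBasis C).repr β) i = ((baseBasis C).repr ((baseBasis C) ⟨β, hβ⟩)) i from by rw [← hb], Module.Basis.repr_self, Finsupp.single_apply]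
    _ = 1 := by rw [Finset.sum_ite_eq]; simp

lemma phiC_comb (C : Base R) (s : Finset V) (f : V → ℝ) :
    phiC C (∑ β ∈ s, f β • β) = ∑ β ∈ s, f β * phiC C β := by
  rw [map_sum]
  exact Finset.sum_congr rfl (fun β _ => by rw [map_smul, smul_eq_mul])

end Aux2
section Aux3

set_option linter.unusedSectionVars false

variable {V : Type*} [NormedAddCommGroup V] [InnerProductSpace ℝ V] {R : RootSystemData V}

open Classical in
/-- The base obtained by reflecting a base in the root θ. -/
noncomputable def sBase (C : Base R) {θ : V} (hθ : θ ∈ R.Δ) : Base R where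
  S := C.S.image (rf θ)
  subset := by
    intro v hv
    rw [Finset.coe_image] at hv
    obtain ⟨γ, hγ, rfl⟩ := hv
    exact R.reflect_mem θ hθ γ (C.subset hγ)
  indep := by
    have hθ0 : θ ≠ 0 := R.nonzero θ hθ
    rw [finset_indep_iff]
    intro f hsum δ hδ
    rw [Finset.sum_image (fun a ha b hb hab => rf_inj hθ0 hab)] at hsum
    have : rf θ (∑ γ ∈ C.S, f (rf θ γ) • γ) = 0 := by
      rw [rf_sum]; simpa using hsum
    have h0 : ∑ γ ∈ C.S, f (rf θ γ) • γ = 0 := by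
      apply rf_inj hθ0
      rw [this]; simp [rf, pairing, inner_zero_left]
    obtain ⟨γ, hγ, rfl⟩ := Finset.mem_image.mp hδ
    exact (finset_indep_iff C.S).mp C.indep _ h0 γ hγ
  decomp := by
    have hθ0 : θ ≠ 0 := R.nonzero θ hθ
    intro α hα
    obtain ⟨c, hc, hsign⟩ := C.decomp (rf θ α) (R.reflect_mem θ hθ α hα)
    refine ⟨fun v => c (rf θ v), ?_, ?_⟩
    · rw [Finset.sum_image (fun a ha b hb hab => rf_inj hθ0 hab)]
      have : α = rf θ (rf θ α) := (rf_rf hθ0 α).symm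
      rw [this, hc, rf_sum]
      exact Finset.sum_congr rfl (fun γ hγ => by dsimp only; rw [rf_rf hθ0])
    · rcases hsign with h | h
      · left; intro β hβ
        obtain ⟨γ, hγ, rfl⟩ := Finset.mem_image.mp hβ
        dsimp only; rw [rf_rf hθ0]; exact h γ hγ
      · right; intro β hβ
        obtain ⟨γ, hγ, rfl⟩ := Finset.mem_image.mp hβ
        dsimp only; rw [rf_rf hθ0]; exact h γ hγ

open Classical in
lemma sBase_S (C : Base R) {θ : V} (hθ : θ ∈ R.Δ) : (sBase C hθ).S = C.S.image (rf θ) := rfl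

lemma mem_sBase {C : Base R} {θ : V} (hθ : θ ∈ R.Δ) {δ : V} :
    δ ∈ (sBase C hθ).S ↔ ∃ γ ∈ C.S, δ = γ - pairing γ θ • θ := by
  classical
  rw [sBase_S, Finset.mem_image]
  constructor
  · rintro ⟨γ, hγ, rfl⟩; exact ⟨γ, hγ, rfl⟩
  · rintro ⟨γ, hγ, rfl⟩; exact ⟨γ, hγ, rfl⟩

lemma Base.ext' {C D : Base R} (h : C.S = D.S) : C = D := by
  cases C; cases D
  simp only at h
  subst h
  rfl

lemma base_finite (R : RootSystemData V) : Finite (Base R) := by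
  classical
  let T : Finset V := R.finite.toFinset
  have : ∀ C : Base R, C.S ∈ T.powerset := by
    intro C
    rw [Finset.mem_powerset]
    intro v hv
    rw [Set.Finite.mem_toFinset]
    exact C.subset hv
  exact Finite.of_injective (fun C : Base R => (⟨C.S, this C⟩ : {s : Finset V // s ∈ T.powerset}))
    (fun C D h => Base.ext' (congrArg Subtype.val h))

/-- The adjacent vertex relation coming from ampleness. -/
lemma ample_step (P : AmplePolytope R) (C : Base R) {θ : V} (hθS : θ ∈ C.S) :
    ∃ r : ℤ, 0 < r ∧ P.μ C - P.μ (sBase C (C.subset hθS)) = (r : ℝ) • θ :=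
  P.ample C (sBase C (C.subset hθS)) θ hθS (fun β => mem_sBase (C.subset hθS))

/-- Membership of `v` in the nonnegative cone of the simple roots of `C`. -/
def Constr (C : Base R) (v : V) : Prop :=
  ∃ c : V → ℝ, (∀ β ∈ C.S, 0 ≤ c β) ∧ v = ∑ β ∈ C.S, c β • β

lemma constr_add {C : Base R} {v w : V} (hv : Constr C v) (hw : Constr C w) :
    Constr C (v + w) := by
  obtain ⟨c, hc, rfl⟩ := hv
  obtain ⟨c', hc', rfl⟩ := hw
  refine ⟨fun β => c β + c' β, fun β hβ => add_nonneg (hc β hβ) (hc' β hβ), ?_⟩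
  rw [← Finset.sum_add_distrib]
  exact Finset.sum_congr rfl (fun β _ => (add_smul _ _ _).symm)

/-- Integer span of the simple roots of `C`, as an additive subgroup. -/
def zspanC (C : Base R) : AddSubgroup V where
  carrier := {v | ∃ c : V → ℤ, v = ∑ β ∈ C.S, (c β : ℝ) • β}
  add_mem' := by
    rintro a b ⟨c, rfl⟩ ⟨c', rfl⟩
    refine ⟨fun β => c β + c' β, ?_⟩
    rw [← Finset.sum_add_distrib]
    exact Finset.sum_congr rfl (fun β _ => by push_cast; rw [add_smul])
  zero_mem' := ⟨0, by simp⟩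
  neg_mem' := by
    rintro a ⟨c, rfl⟩
    refine ⟨fun β => - c β, ?_⟩
    rw [← Finset.sum_neg_distrib]
    exact Finset.sum_congr rfl (fun β _ => by push_cast; rw [neg_smul])

lemma rootLattice_le_zspanC (C : Base R) : rootLattice R ≤ zspanC C := by
  rw [rootLattice, AddSubgroup.closure_le]
  intro α hα
  obtain ⟨c, hc, -⟩ := C.decomp α hα
  exact ⟨c, hc⟩

lemma constr_int (C : Base R) {v : V} (hv : v ∈ rootLattice R) {c : V → ℝ}
    (hrep : v = ∑ β ∈ C.S, c β • β) : ∀ β ∈ C.S, ∃ m : ℤ, c β = m := by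
  obtain ⟨cz, hcz⟩ := rootLattice_le_zspanC C hv
  intro β hβ
  exact ⟨cz β, coords_unique C (hrep.symm.trans hcz) β hβ⟩

end Aux3
section Aux4

set_option linter.unusedSectionVars false
set_option maxHeartbeats 1000000

variable {V : Type*} [NormedAddCommGroup V] [InnerProductSpace ℝ V] {R : RootSystemData V}
  [FiniteDimensional ℝ V]

lemma phiC_ge_one (C : Base R) {γ : V} (hγ0 : γ ≠ 0) {c : V → ℤ}
    (hc0 : ∀ β ∈ C.S, 0 ≤ c β) (hrep : γ = ∑ β ∈ C.S, (c β : ℝ) • β) :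
    (1:ℝ) ≤ phiC C γ ∧ phiC C γ = ((∑ β ∈ C.S, c β : ℤ) : ℝ) := by
  have hval : phiC C γ = ((∑ β ∈ C.S, c β : ℤ) : ℝ) := by
    rw [hrep, phiC_comb]
    push_cast
    exact Finset.sum_congr rfl (fun β hβ => by rw [phiC_base C hβ, mul_one])
  have hsum : 1 ≤ ∑ β ∈ C.S, c β := by
    by_contra hlt
    push_neg at hlt
    have hz : ∑ β ∈ C.S, c β = 0 := le_antisymm (by omega) (Finset.sum_nonneg hc0)
    have : ∀ β ∈ C.S, c β = 0 := (Finset.sum_eq_zero_iff_of_nonneg hc0).mp hz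
    apply hγ0
    rw [hrep]
    exact Finset.sum_eq_zero (fun β hβ => by rw [this β hβ]; simp)
  exact ⟨hval ▸ (by exact_mod_cast hsum), hval⟩

lemma base_eq (C D : Base R)
    (h : ∀ γ ∈ D.S, ∃ c : V → ℤ, (∀ β ∈ C.S, 0 ≤ c β) ∧ γ = ∑ β ∈ C.S, (c β : ℝ) • β) :
    D = C := by
  classical
  have hφ1 : ∀ γ ∈ D.S, (1:ℝ) ≤ phiC C γ := by
    intro γ hγ
    obtain ⟨c, hc0, hrep⟩ := h γ hγ
    exact (phiC_ge_one C (R.nonzero γ (D.subset hγ)) hc0 hrep).1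
  have key : C.S ⊆ D.S := by
    intro β hβ
    have hβ0 : β ≠ 0 := R.nonzero β (C.subset hβ)
    obtain ⟨cz, hrep, hsign⟩ := D.decomp β (C.subset hβ)
    have hφβ : phiC C β = 1 := phiC_base C hβ
    have hφsum : phiC C β = ∑ δ ∈ D.S, (cz δ : ℝ) * phiC C δ := by
      rw [hrep, phiC_comb]
    rcases hsign with hpos | hneg
    swap
    · exfalso
      have : ∑ δ ∈ D.S, (cz δ : ℝ) * phiC C δ ≤ 0 :=
        Finset.sum_nonpos (fun δ hδ => mul_nonpos_of_nonpos_of_nonneg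
          (by exact_mod_cast hneg δ hδ) (le_trans zero_le_one (hφ1 δ hδ)))
      rw [hφβ] at hφsum; linarith
    -- positive branch
    have hsum_le : (↑(∑ δ ∈ D.S, cz δ) : ℝ) ≤ 1 := by
      have : ∑ δ ∈ D.S, (cz δ : ℝ) ≤ ∑ δ ∈ D.S, (cz δ : ℝ) * phiC C δ :=
        Finset.sum_le_sum (fun δ hδ => by
          have h1 := hφ1 δ hδ
          have h0 : (0:ℝ) ≤ (cz δ : ℝ) := by exact_mod_cast hpos δ hδ
          nlinarith)
      rw [hφβ] at hφsum
      push_cast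
      linarith
    have hsum_ge : 1 ≤ ∑ δ ∈ D.S, cz δ := by
      by_contra hlt
      push_neg at hlt
      have hz : ∑ δ ∈ D.S, cz δ = 0 := le_antisymm (by omega) (Finset.sum_nonneg hpos)
      have hall : ∀ δ ∈ D.S, cz δ = 0 := (Finset.sum_eq_zero_iff_of_nonneg hpos).mp hz
      apply hβ0
      rw [hrep]
      exact Finset.sum_eq_zero (fun δ hδ => by rw [hall δ hδ]; simp)
    have hsum_eq : ∑ δ ∈ D.S, cz δ = 1 := by
      have : (∑ δ ∈ D.S, cz δ : ℤ) ≤ 1 := by exact_mod_cast hsum_le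
      omega
    -- find the unique δ0
    have hδ0 : ∃ δ0 ∈ D.S, 1 ≤ cz δ0 := by
      by_contra hno
      push_neg at hno
      have : ∑ δ ∈ D.S, cz δ ≤ 0 := Finset.sum_nonpos (fun δ hδ => by
        have := hno δ hδ; omega)
      omega
    obtain ⟨δ0, hδ0S, hδ0ge⟩ := hδ0
    have herase : ∑ δ ∈ D.S.erase δ0, cz δ = 1 - cz δ0 := by
      rw [← Finset.sum_erase_add D.S cz hδ0S] at hsum_eq
      omega
    have hge : 0 ≤ ∑ δ ∈ D.S.erase δ0, cz δ :=
      Finset.sum_nonneg (fun δ hδ => hpos δ (Finset.mem_of_mem_erase hδ))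
    have herase0 : ∀ δ ∈ D.S.erase δ0, cz δ = 0 := by
      have hle : ∑ δ ∈ D.S.erase δ0, cz δ ≤ 0 := by omega
      exact (Finset.sum_eq_zero_iff_of_nonneg
        (fun δ hδ => hpos δ (Finset.mem_of_mem_erase hδ))).mp (le_antisymm hle hge)
    have hcz1 : cz δ0 = 1 := by omega
    have : β = δ0 := by
      rw [hrep, Finset.sum_eq_single_of_mem δ0 hδ0S (fun b hb hbne => by
        rw [herase0 b (Finset.mem_erase.mpr ⟨hbne, hb⟩)]; simp), hcz1]
      simp
    rw [this]; exact hδ0S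
  have hcard : D.S.card ≤ C.S.card := by rw [card_base C, card_base D]
  exact Base.ext' (Finset.eq_of_subset_of_card_le key hcard) |>.symm

lemma vertex_constr (P : AmplePolytope R) (C D : Base R) : Constr C (P.μ C - P.μ D) := by
  classical
  haveI := base_finite R
  haveI : Fintype (Base R) := Fintype.ofFinite _
  set t : Base R → ℝ := fun E => phiC C (P.μ E) with ht
  suffices h : ∀ (n : ℕ) (D : Base R),
      (Finset.univ.filter (fun E => t D < t E)).card ≤ n → Constr C (P.μ C - P.μ D) by
    exact h _ D le_rfl
  intro n
  induction n with
  | zero =>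
    intro D hcard
    by_cases hpos : ∀ γ ∈ D.S, ∃ c : V → ℤ, (∀ β ∈ C.S, 0 ≤ c β) ∧ γ = ∑ β ∈ C.S, (c β : ℝ) • β
    · rw [base_eq C D hpos]
      exact ⟨0, fun β _ => le_rfl, by simp⟩
    · exfalso
      push_neg at hpos
      obtain ⟨γ, hγS, hnot⟩ := hpos
      obtain ⟨c, hrep, hsign⟩ := C.decomp γ (D.subset hγS)
      have hneg : ∀ β ∈ C.S, c β ≤ 0 := by
        rcases hsign with hp | hn
        · exact absurd hrep (hnot c hp)
        · exact hn
      have hγ0 : γ ≠ 0 := R.nonzero γ (D.subset hγS)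
      have hφγ : phiC C γ ≤ -1 := by
        have hφval : phiC C γ = ((∑ β ∈ C.S, c β : ℤ) : ℝ) := by
          rw [hrep, phiC_comb]
          push_cast
          exact Finset.sum_congr rfl (fun β hβ => by rw [phiC_base C hβ, mul_one])
        have hsum : ∑ β ∈ C.S, c β ≤ -1 := by
          by_contra hlt
          push_neg at hlt
          have hz : ∑ β ∈ C.S, c β = 0 := le_antisymm (Finset.sum_nonpos hneg) (by omega)
          have : ∀ β ∈ C.S, c β = 0 := (Finset.sum_eq_zero_iff_of_nonpos hneg).mp hz
          apply hγ0
          rw [hrep]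
          exact Finset.sum_eq_zero (fun β hβ => by rw [this β hβ]; simp)
        rw [hφval]
        exact_mod_cast hsum
      obtain ⟨r, hr, hμ⟩ := ample_step P D hγS
      have hmem : sBase D (D.subset hγS) ∈ Finset.univ.filter (fun E => t D < t E) := by
        rw [Finset.mem_filter]
        refine ⟨Finset.mem_univ _, ?_⟩
        have : t D - t (sBase D (D.subset hγS)) = (r:ℝ) * phiC C γ := by
          rw [ht]
          dsimp only
          rw [← map_sub, hμ, map_smul, smul_eq_mul]
        have hr1 : (1:ℝ) ≤ (r:ℝ) := by exact_mod_cast hr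
        nlinarith
      have : 0 < (Finset.univ.filter (fun E => t D < t E)).card :=
        Finset.card_pos.mpr ⟨_, hmem⟩
      omega
  | succ n ih =>
    intro D hcard
    by_cases hpos : ∀ γ ∈ D.S, ∃ c : V → ℤ, (∀ β ∈ C.S, 0 ≤ c β) ∧ γ = ∑ β ∈ C.S, (c β : ℝ) • β
    · rw [base_eq C D hpos]
      exact ⟨0, fun β _ => le_rfl, by simp⟩
    · push_neg at hpos
      obtain ⟨γ, hγS, hnot⟩ := hpos
      obtain ⟨c, hrep, hsign⟩ := C.decomp γ (D.subset hγS)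
      have hneg : ∀ β ∈ C.S, c β ≤ 0 := by
        rcases hsign with hp | hn
        · exact absurd hrep (hnot c hp)
        · exact hn
      have hγ0 : γ ≠ 0 := R.nonzero γ (D.subset hγS)
      have hφγ : phiC C γ ≤ -1 := by
        have hφval : phiC C γ = ((∑ β ∈ C.S, c β : ℤ) : ℝ) := by
          rw [hrep, phiC_comb]
          push_cast
          exact Finset.sum_congr rfl (fun β hβ => by rw [phiC_base C hβ, mul_one])
        have hsum : ∑ β ∈ C.S, c β ≤ -1 := by
          by_contra hlt
          push_neg at hlt
          have hz : ∑ β ∈ C.S, c β = 0 := le_antisymm (Finset.sum_nonpos hneg) (by omega)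
          have : ∀ β ∈ C.S, c β = 0 := (Finset.sum_eq_zero_iff_of_nonpos hneg).mp hz
          apply hγ0
          rw [hrep]
          exact Finset.sum_eq_zero (fun β hβ => by rw [this β hβ]; simp)
        rw [hφval]
        exact_mod_cast hsum
      obtain ⟨r, hr, hμ⟩ := ample_step P D hγS
      set D' := sBase D (D.subset hγS) with hD'
      have htlt : t D < t D' := by
        have : t D - t D' = (r:ℝ) * phiC C γ := by
          rw [ht]; dsimp only
          rw [← map_sub, hμ, map_smul, smul_eq_mul]
        have hr1 : (1:ℝ) ≤ (r:ℝ) := by exact_mod_cast hr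
        nlinarith
      have hss : (Finset.univ.filter (fun E => t D' < t E)) ⊂
          (Finset.univ.filter (fun E => t D < t E)) := by
        constructor
        · intro E hE
          rw [Finset.mem_filter] at *
          exact ⟨hE.1, lt_trans htlt hE.2⟩
        · intro hsub
          have : D' ∈ Finset.univ.filter (fun E => t D < t E) := by
            rw [Finset.mem_filter]; exact ⟨Finset.mem_univ _, htlt⟩
          have := hsub this
          rw [Finset.mem_filter] at this
          exact lt_irrefl _ this.2
      have hcard' : (Finset.univ.filter (fun E => t D' < t E)).card ≤ n := by
        have := Finset.card_lt_card hss
        omega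
      have hC' : Constr C (P.μ C - P.μ D') := ih D' hcard'
      have hstep : Constr C (P.μ D' - P.μ D) := by
        refine ⟨fun β => (r:ℝ) * (-(c β)), fun β hβ => by
          have := hneg β hβ
          have hr0 : (0:ℝ) ≤ (r:ℝ) := by exact_mod_cast hr.le
          have : (0:ℝ) ≤ (-(c β) : ℤ) := by exact_mod_cast (by omega : (0:ℤ) ≤ -(c β))
          push_cast at *
          nlinarith, ?_⟩
        have : P.μ D' - P.μ D = -((r:ℝ) • γ) := by rw [← hμ]; abel
        rw [this, hrep, Finset.smul_sum, ← Finset.sum_neg_distrib]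
        apply Finset.sum_congr rfl
        intro β hβ
        push_cast
        rw [smul_smul]
        ring_nf
        module
      have := constr_add hC' hstep
      have heq : P.μ C - P.μ D' + (P.μ D' - P.μ D) = P.μ C - P.μ D := by abel
      rwa [heq] at this

end Aux4
section Aux5

set_option linter.unusedSectionVars false
set_option maxHeartbeats 1000000

variable {V : Type*} [NormedAddCommGroup V] [InnerProductSpace ℝ V] {R : RootSystemData V}
  [FiniteDimensional ℝ V]

lemma constr_of_mem_carrier (P : AmplePolytope R) (C : Base R) {v : V}
    (hv : v ∈ P.carrier) : Constr C (P.μ C - v) := by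
  have hsub : P.carrier ⊆ {w | Constr C (P.μ C - w)} := by
    rw [AmplePolytope.carrier]
    apply convexHull_min
    · rintro _ ⟨D, rfl⟩
      exact vertex_constr P C D
    · intro w1 hw1 w2 hw2 a b ha hb hab
      obtain ⟨c1, hc1, hr1⟩ := hw1
      obtain ⟨c2, hc2, hr2⟩ := hw2
      refine ⟨fun β => a * c1 β + b * c2 β, fun β hβ =>
        add_nonneg (mul_nonneg ha (hc1 β hβ)) (mul_nonneg hb (hc2 β hβ)), ?_⟩
      have : P.μ C - (a • w1 + b • w2) = a • (P.μ C - w1) + b • (P.μ C - w2) := by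
        match_scalars <;> linarith
      rw [this, hr1, hr2, Finset.smul_sum, Finset.smul_sum, ← Finset.sum_add_distrib]
      apply Finset.sum_congr rfl
      intro β hβ
      rw [smul_smul, smul_smul, ← add_smul]
  exact hsub hv

lemma mem_carrier_of_constr (P : AmplePolytope R) (C₀ : Base R) {v : V}
    (h : ∀ C : Base R, Constr C (P.μ C - v)) : v ∈ P.carrier := by
  haveI := base_finite R
  haveI : Nonempty (Base R) := ⟨C₀⟩
  by_contra hv
  have hconv : Convex ℝ P.carrier := convex_convexHull ℝ _
  have hclosed : IsClosed P.carrier :=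
    ((Set.finite_range P.μ).isCompact_convexHull ℝ).isClosed
  obtain ⟨f, u, hfu, hufx⟩ := geometric_hahn_banach_closed_point hconv hclosed hv
  obtain ⟨Cm, hCm⟩ := Finite.exists_max (fun C : Base R => f (P.μ C))
  have hdom : ∀ β ∈ Cm.S, 0 ≤ f β := by
    intro β hβ
    obtain ⟨r, hr, hμ⟩ := ample_step P Cm hβ
    have h1 : f (P.μ (sBase Cm (Cm.subset hβ))) ≤ f (P.μ Cm) := hCm _
    have h2 : f (P.μ Cm) - f (P.μ (sBase Cm (Cm.subset hβ))) = (r:ℝ) * f β := by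
      rw [← map_sub, hμ, map_smul, smul_eq_mul]
    have hr1 : (1:ℝ) ≤ (r:ℝ) := by exact_mod_cast hr
    nlinarith
  obtain ⟨c, hc0, hrep⟩ := h Cm
  have hfv : f v ≤ f (P.μ Cm) := by
    have : f (P.μ Cm) - f v = ∑ β ∈ Cm.S, c β * f β := by
      rw [← map_sub, hrep, map_sum]
      exact Finset.sum_congr rfl (fun β _ => by rw [map_smul, smul_eq_mul])
    have hsum : 0 ≤ ∑ β ∈ Cm.S, c β * f β :=
      Finset.sum_nonneg (fun β hβ => mul_nonneg (hc0 β hβ) (hdom β hβ))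
    linarith
  have hmem : P.μ Cm ∈ P.carrier := subset_convexHull ℝ _ ⟨Cm, rfl⟩
  have := hfu _ hmem
  linarith

end Aux5
section Aux6

set_option linter.unusedSectionVars false
set_option maxHeartbeats 1000000

variable {V : Type*} [NormedAddCommGroup V] [InnerProductSpace ℝ V] {R : RootSystemData V}
  [FiniteDimensional ℝ V]

lemma sum_add_single [DecidableEq V] (S : Finset V) {β : V} (hβ : β ∈ S) (f : V → ℝ) (c : ℝ) :
    (∑ γ ∈ S, f γ • γ) + c • β = ∑ γ ∈ S, (if γ = β then f γ + c else f γ) • γ := by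
  classical
  have : ∀ γ ∈ S, (if γ = β then f γ + c else f γ) • γ
      = f γ • γ + (if γ = β then c • γ else 0) := by
    intro γ _
    by_cases h : γ = β
    · subst h; simp [add_smul]
    · simp [h]
  rw [Finset.sum_congr rfl this, Finset.sum_add_distrib, Finset.sum_ite_eq' S β (fun γ => c • γ),
    if_pos hβ]

lemma zsum_add_single [DecidableEq V] (S : Finset V) {β : V} (hβ : β ∈ S) (f : V → ℤ) (c : ℤ) :
    (∑ γ ∈ S, (if γ = β then f γ + c else f γ)) = (∑ γ ∈ S, f γ) + c := by
  classical
  have : ∀ γ ∈ S, (if γ = β then f γ + c else f γ) = f γ + (if γ = β then c else 0) := by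
    intro γ _
    by_cases h : γ = β <;> simp [h]
  rw [Finset.sum_congr rfl this, Finset.sum_add_distrib, Finset.sum_ite_eq' S β (fun _ => c),
    if_pos hβ]

/-- Representation of a positive root `α` over the base reflected in the simple root `β`. -/
lemma sBase_rep (C : Base R) {α β : V} (hαΔ : α ∈ R.Δ) (hβS : β ∈ C.S)
    (hne : α ≠ β) {n : V → ℤ} (hn0 : ∀ γ ∈ C.S, 0 ≤ n γ)
    (hrep : α = ∑ γ ∈ C.S, (n γ : ℝ) • γ) {q : ℤ} (hq : pairing α β = q) :
    ∃ m : V → ℤ, (∀ δ ∈ (sBase C (C.subset hβS)).S, 0 ≤ m δ) ∧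
      α = ∑ δ ∈ (sBase C (C.subset hβS)).S, (m δ : ℝ) • δ ∧
      ∑ δ ∈ (sBase C (C.subset hβS)).S, m δ = (∑ γ ∈ C.S, n γ) - q := by
  classical
  have hβΔ : β ∈ R.Δ := C.subset hβS
  have hβ0 : β ≠ 0 := R.nonzero β hβΔ
  have hα0 : α ≠ 0 := R.nonzero α hαΔ
  set nn : V → ℤ := fun γ => if γ = β then n β - q else n γ with hnn
  have hs : rf β α = ∑ γ ∈ C.S, (nn γ : ℝ) • γ := by
    rw [rf_apply, hq]
    nth_rewrite 1 [hrep]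
    rw [show (∑ γ ∈ C.S, (n γ:ℝ) • γ) - (q:ℝ) • β
        = (∑ γ ∈ C.S, (n γ:ℝ) • γ) + (-(q:ℝ)) • β from by rw [neg_smul]; abel,
      sum_add_single C.S hβS (fun γ => (n γ:ℝ)) (-(q:ℝ))]
    apply Finset.sum_congr rfl
    intro γ _
    by_cases h : γ = β
    · subst h; simp only [hnn, if_pos rfl]; push_cast; module
    · simp only [hnn, if_neg h]
  have hγ0 : ∃ γ0 ∈ C.S, γ0 ≠ β ∧ 1 ≤ n γ0 := by
    by_contra hno
    push_neg at hno
    have hall : ∀ γ ∈ C.S, γ ≠ β → n γ = 0 := by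
      intro γ hγ hne'
      have h1 := hno γ hγ hne'
      have := hn0 γ hγ
      omega
    have hcol : α = (n β : ℝ) • β := by
      rw [hrep, Finset.sum_eq_single_of_mem β hβS]
      intro b hb hbne
      rw [hall b hb hbne]
      simp
    have := R.reduced β hβΔ (n β : ℝ) (by rw [← hcol]; exact hαΔ)
    rcases this with h1 | h1
    · apply hne
      rw [hcol, h1, one_smul]
    · have : (0:ℝ) ≤ (n β : ℝ) := by exact_mod_cast hn0 β hβS
      rw [h1] at this
      linarith
  obtain ⟨γ0, hγ0S, hγ0ne, hγ0ge⟩ := hγ0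
  have hrfΔ : rf β α ∈ R.Δ := R.reflect_mem β hβΔ α hαΔ
  obtain ⟨cz, hczrep, hsign⟩ := C.decomp (rf β α) hrfΔ
  have hczn : ∀ γ ∈ C.S, cz γ = nn γ := by
    intro γ hγ
    have h := coords_unique C (f := fun γ => (cz γ : ℝ)) (g := fun γ => (nn γ : ℝ))
      (by rw [← hczrep, ← hs]) γ hγ
    exact_mod_cast h
  have hnn0 : ∀ γ ∈ C.S, 0 ≤ nn γ := by
    rcases hsign with hp | hn
    · intro γ hγ
      rw [← hczn γ hγ]
      exact hp γ hγ
    · exfalso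
      have h2 := hn γ0 hγ0S
      rw [hczn γ0 hγ0S] at h2
      have h3 : nn γ0 = n γ0 := by simp [hnn, hγ0ne]
      omega
  refine ⟨fun δ => nn (rf β δ), ?_, ?_, ?_⟩
  · intro δ hδ
    rw [mem_sBase] at hδ
    obtain ⟨γ, hγ, rfl⟩ := hδ
    have : rf β γ = γ - pairing γ β • β := rf_apply β γ
    dsimp only
    rw [show (γ - pairing γ β • β) = rf β γ from rfl, rf_rf hβ0]
    exact hnn0 γ hγ
  · rw [sBase_S, Finset.sum_image (fun a _ b _ hab => rf_inj hβ0 hab)]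
    have : α = rf β (rf β α) := (rf_rf hβ0 α).symm
    rw [this, hs, rf_sum]
    apply Finset.sum_congr rfl
    intro γ _
    dsimp only
    rw [rf_rf hβ0]
  · rw [sBase_S, Finset.sum_image (fun a _ b _ hab => rf_inj hβ0 hab)]
    have h1 : ∀ γ ∈ C.S, nn (rf β (rf β γ)) = nn γ := fun γ _ => by rw [rf_rf hβ0]
    rw [Finset.sum_congr rfl h1]
    have := zsum_add_single C.S hβS n (-q)
    rw [show (∑ γ ∈ C.S, nn γ) = ∑ γ ∈ C.S, (if γ = β then n γ + (-q) else n γ) from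
      Finset.sum_congr rfl (fun γ _ => by
        by_cases h : γ = β
        · subst h
          show (if γ = γ then n γ - q else n γ) = _
          rw [if_pos rfl, if_pos rfl]
          omega
        · show (if γ = β then n β - q else n γ) = _
          rw [if_neg h, if_neg h]), this]
    omega

lemma special_pairing_nonneg (P : AmplePolytope R) (hP : IsSpecial P) (C : Base R) {α : V}
    {n : V → ℤ} (hn0 : ∀ γ ∈ C.S, 0 ≤ n γ) (hrep : α = ∑ γ ∈ C.S, (n γ : ℝ) • γ) :
    0 ≤ pairing (P.μ C) α := by
  have hinner : (0:ℝ) ≤ inner ℝ (P.μ C) α := by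
    have hval : (inner ℝ (P.μ C) α : ℝ) = ∑ γ ∈ C.S, (n γ : ℝ) * (inner ℝ (P.μ C) γ : ℝ) := by
      nth_rewrite 1 [hrep]
      rw [inner_sum]
      exact Finset.sum_congr rfl (fun γ _ => real_inner_smul_right _ _ _)
    rw [hval]
    apply Finset.sum_nonneg
    intro γ hγ
    have h1 : (0:ℝ) ≤ (n γ : ℝ) := by exact_mod_cast hn0 γ hγ
    have h2 : (0:ℝ) ≤ inner ℝ (P.μ C) γ := by
      have hsp := hP C γ hγ
      have hγγ : (0:ℝ) < inner ℝ γ γ := rinner_self_pos (R.nonzero γ (C.subset hγ))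
      rw [pairing] at hsp
      by_contra hcon
      push_neg at hcon
      have : 2 * (inner ℝ (P.μ C) γ : ℝ) / (inner ℝ γ γ : ℝ) < 0 :=
        div_neg_of_neg_of_pos (by linarith) hγγ
      linarith
    exact mul_nonneg h1 h2
  rw [pairing]
  exact div_nonneg (by linarith) real_inner_self_nonneg

end Aux6
section Aux7

set_option linter.unusedSectionVars false
set_option maxHeartbeats 4000000

variable {V : Type*} [NormedAddCommGroup V] [InnerProductSpace ℝ V] {R : RootSystemData V}
  [FiniteDimensional ℝ V]

lemma master (P : AmplePolytope R) (hP : IsSpecial P) {x α : V} (hαΔ : α ∈ R.Δ)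
    (hxint : ∀ C : Base R, x - P.μ C ∈ rootLattice R) (hxα : pairing x α = -1)
    (hcon : ∀ C : Base R, Constr C (P.μ C - x)) :
    ∀ C : Base R, Constr C (P.μ C - x - α) := by
  classical
  by_contra hbad
  push_neg at hbad
  have hα0 : α ≠ 0 := R.nonzero α hαΔ
  have hex : ∃ h : ℕ, ∃ C : Base R, ¬ Constr C (P.μ C - x - α) ∧
      ∃ n : V → ℤ, (∀ γ ∈ C.S, 0 ≤ n γ) ∧ α = ∑ γ ∈ C.S, (n γ : ℝ) • γ ∧
        (∑ γ ∈ C.S, n γ).toNat = h := by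
    obtain ⟨C, hC⟩ := hbad
    obtain ⟨c, hcrep, hsign⟩ := C.decomp α hαΔ
    have hcpos : ∀ γ ∈ C.S, 0 ≤ c γ := by
      rcases hsign with h | h
      · exact h
      · exfalso
        apply hC
        have hCα : Constr C (-α) := by
          refine ⟨fun γ => -(c γ : ℝ), fun γ hγ => by
            have h1 := h γ hγ
            have h2 : (c γ : ℝ) ≤ 0 := by exact_mod_cast h1
            show (0:ℝ) ≤ -(c γ : ℝ)
            linarith, ?_⟩
          rw [hcrep, ← Finset.sum_neg_distrib]
          exact Finset.sum_congr rfl (fun γ _ => (neg_smul _ _).symm)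
        have h2 := constr_add (hcon C) hCα
        have h3 : P.μ C - x + -α = P.μ C - x - α := by abel
        rwa [h3] at h2
    exact ⟨_, C, hC, c, hcpos, hcrep, rfl⟩
  obtain ⟨C, hCbad, n, hn0, hnrep, hnh⟩ := Nat.find_spec hex
  obtain ⟨d, hd0, hdrep⟩ := hcon C
  have hμxY : P.μ C - x ∈ rootLattice R := by
    have := (rootLattice R).neg_mem (hxint C)
    rwa [neg_sub] at this
  have hdz : ∀ β ∈ C.S, ∃ m : ℤ, d β = m := constr_int C hμxY hdrep
  have hdn : P.μ C - x - α = ∑ γ ∈ C.S, (d γ - (n γ : ℝ)) • γ := by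
    have h1 : P.μ C - x - α = (∑ γ ∈ C.S, d γ • γ) - ∑ γ ∈ C.S, (n γ : ℝ) • γ := by
      rw [← hdrep, ← hnrep]
    rw [h1, ← Finset.sum_sub_distrib]
    exact Finset.sum_congr rfl (fun γ _ => (sub_smul _ _ _).symm)
  have hviol : ∃ β0 ∈ C.S, d β0 < (n β0 : ℝ) := by
    by_contra hno
    push_neg at hno
    exact hCbad ⟨fun γ => d γ - (n γ : ℝ), fun γ hγ => by
      have := hno γ hγ
      show (0:ℝ) ≤ d γ - (n γ : ℝ)
      linarith, hdn⟩
  have keyCross : ∀ β ∈ C.S, α ≠ β → (1:ℝ) ≤ pairing α β →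
      ∀ γ ∈ C.S, γ ≠ β → (n γ : ℝ) ≤ d γ := by
    intro β hβS hne hq1 γ hγS hγβ
    have hβΔ : β ∈ R.Δ := C.subset hβS
    have hβ0 : β ≠ 0 := R.nonzero β hβΔ
    obtain ⟨q, hq⟩ := R.crystallographic α hαΔ β hβΔ
    obtain ⟨m, hm0, hmrep, hmsum⟩ := sBase_rep C hαΔ hβS hne hn0 hnrep hq
    have hq1' : 1 ≤ q := by
      rw [hq] at hq1
      exact_mod_cast hq1
    have hm0' : 0 ≤ ∑ δ ∈ (sBase C (C.subset hβS)).S, m δ := Finset.sum_nonneg hm0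
    have hlt : (∑ δ ∈ (sBase C (C.subset hβS)).S, m δ).toNat < Nat.find hex := by
      rw [← hnh]
      rw [hmsum] at hm0' ⊢
      omega
    have hC'good : Constr (sBase C (C.subset hβS)) (P.μ (sBase C (C.subset hβS)) - x - α) := by
      by_contra hbad'
      exact Nat.find_min hex hlt ⟨sBase C (C.subset hβS), hbad', m, hm0, hmrep, rfl⟩
    obtain ⟨e, he0, herep⟩ := hC'good
    obtain ⟨r, hrpos, hμr⟩ := ample_step P C hβS
    set pr : ℝ := pairing (P.μ C - x) β with hpr
    set g : V → ℝ := fun γ' =>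
      if γ' = β then (d β - (n β : ℝ)) + ((r:ℝ) - pr + (q:ℝ)) else d γ' - (n γ' : ℝ) with hg
    have hA : pairing (P.μ C - x - α) β = pr - (q:ℝ) := by
      rw [pairing_sub_left, hq, hpr]
    have hW : P.μ (sBase C (C.subset hβS)) - x - α = (P.μ C - x - α) - (r:ℝ) • β := by
      rw [← hμr]; abel
    have hrfW : rf β (P.μ (sBase C (C.subset hβS)) - x - α) = ∑ γ' ∈ C.S, g γ' • γ' := by
      rw [hW, rf_apply, pairing_sub_left, pairing_smul_left, pairing_self hβ0, hA]
      have h5 : (P.μ C - x - α) - (r:ℝ) • β - (pr - (q:ℝ) - (r:ℝ) * 2) • β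
          = (∑ γ' ∈ C.S, (d γ' - (n γ' : ℝ)) • γ') + ((r:ℝ) - pr + (q:ℝ)) • β := by
        rw [hdn]
        module
      rw [h5, sum_add_single C.S hβS (fun γ' => d γ' - (n γ' : ℝ)) ((r:ℝ) - pr + (q:ℝ))]
      apply Finset.sum_congr rfl
      intro γ' _
      by_cases h : γ' = β
      · subst h; simp [hg]
      · simp only [hg]; rw [if_neg h, if_neg h]
    have htrans : P.μ (sBase C (C.subset hβS)) - x - α
        = ∑ δ ∈ (sBase C (C.subset hβS)).S, g (rf β δ) • δ := by
      conv_lhs => rw [← rf_rf hβ0 (P.μ (sBase C (C.subset hβS)) - x - α)]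
      rw [hrfW, rf_sum, sBase_S, Finset.sum_image (fun a _ b _ hab => rf_inj hβ0 hab)]
      apply Finset.sum_congr rfl
      intro γ' _
      rw [rf_rf hβ0]
    have heg := coords_unique (sBase C (C.subset hβS)) (herep.symm.trans htrans)
    have hmem' : rf β γ ∈ (sBase C (C.subset hβS)).S := by
      rw [mem_sBase]
      exact ⟨γ, hγS, rfl⟩
    have he := he0 _ hmem'
    have heg' := heg _ hmem'
    simp only [rf_rf hβ0] at heg'
    rw [heg'] at he
    simp only [hg] at he
    rw [if_neg hγβ] at he
    linarith
  have hex1 : ∃ γ1 ∈ C.S, (1:ℝ) ≤ pairing α γ1 := by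
    by_contra hno
    push_neg at hno
    have hαα : (0:ℝ) < inner ℝ α α := rinner_self_pos hα0
    have hsum : (inner ℝ α α : ℝ) = ∑ γ ∈ C.S, (n γ : ℝ) * (inner ℝ γ α : ℝ) := by
      nth_rewrite 1 [hnrep]
      rw [sum_inner]
      exact Finset.sum_congr rfl (fun γ _ => real_inner_smul_left _ _ _)
    have hterms : ∀ γ ∈ C.S, (n γ : ℝ) * (inner ℝ γ α : ℝ) ≤ 0 := by
      intro γ hγ
      have hγΔ := C.subset hγ
      have hγ0 := R.nonzero γ hγΔ
      obtain ⟨z, hz⟩ := R.crystallographic α hαΔ γ hγΔ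
      have hzle : pairing α γ ≤ 0 := by
        have := hno γ hγ
        rw [hz] at this ⊢
        have : z < 1 := by exact_mod_cast this
        have : z ≤ 0 := by omega
        exact_mod_cast this
      have hγα : pairing γ α ≤ 0 := pairing_nonpos_flip hα0 hγ0 hzle
      have hinner : (inner ℝ γ α : ℝ) ≤ 0 := by
        rw [pairing] at hγα
        by_contra hcon2
        push_neg at hcon2
        have : (0:ℝ) < 2 * inner ℝ γ α / inner ℝ α α := by positivity
        linarith
      have hn0' : (0:ℝ) ≤ (n γ : ℝ) := by exact_mod_cast hn0 γ hγ
      exact mul_nonpos_of_nonneg_of_nonpos hn0' hinner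
    have := Finset.sum_nonpos hterms
    rw [← hsum] at this
    linarith
  obtain ⟨γ1, hγ1S, hpγ1⟩ := hex1
  obtain ⟨β0, hβ0S, hβ0lt⟩ := hviol
  have hid : pairing (P.μ C - x) α = pairing (P.μ C) α + 1 := by
    rw [pairing_sub_left, hxα]; ring
  have hdsum : pairing (P.μ C - x) α = ∑ γ ∈ C.S, d γ * pairing γ α := by
    rw [hdrep, pairing_sum_left]
  by_cases hαmem : α ∈ C.S
  · -- α is simple in C
    have hind : ∀ γ ∈ C.S, (n γ : ℝ) = if γ = α then 1 else 0 := by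
      apply coords_unique C (f := fun γ => (n γ : ℝ)) (g := fun γ => if γ = α then (1:ℝ) else 0)
      rw [← hnrep]
      have h6 : ∀ γ ∈ C.S, (if γ = α then (1:ℝ) else 0) • γ = if γ = α then γ else 0 := by
        intro γ _
        by_cases h : γ = α
        · rw [if_pos h, if_pos h, one_smul]
        · rw [if_neg h, if_neg h, zero_smul]
      rw [Finset.sum_congr rfl h6, Finset.sum_ite_eq' C.S α (fun γ => γ), if_pos hαmem]
    by_cases hX : ∃ β ∈ C.S, α ≠ β ∧ (1:ℝ) ≤ pairing α β
    · obtain ⟨β, hβS, hneβ, hq1⟩ := hX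
      have hkc := keyCross β hβS hneβ hq1 α hαmem hneβ
      have hnα : (n α : ℝ) = 1 := by rw [hind α hαmem, if_pos rfl]
      rcases eq_or_ne β0 α with h | h
      · subst h
        rw [hnα] at hβ0lt
        linarith
      · have : (n β0 : ℝ) = 0 := by rw [hind β0 hβ0S, if_neg h]
        rw [this] at hβ0lt
        have := hd0 β0 hβ0S
        linarith
    · push_neg at hX
      have hβ0α : β0 = α := by
        by_contra h
        have h7 : (n β0 : ℝ) = 0 := by rw [hind β0 hβ0S, if_neg h]
        rw [h7] at hβ0lt
        have := hd0 β0 hβ0S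
        linarith
      rw [hβ0α] at hβ0lt
      have hdα0 : d α = 0 := by
        obtain ⟨mz, hmz⟩ := hdz α hαmem
        have h8 : (n α : ℝ) = 1 := by rw [hind α hαmem, if_pos rfl]
        rw [h8, hmz] at hβ0lt
        have h9 : mz < 1 := by exact_mod_cast hβ0lt
        have h10 : (0:ℝ) ≤ (mz:ℝ) := hmz ▸ hd0 α hαmem
        have h11 : 0 ≤ mz := by exact_mod_cast h10
        rw [hmz]
        have h12 : mz = 0 := by omega
        rw [h12]; norm_num
      have herase_le : ∑ γ ∈ C.S.erase α, d γ * pairing γ α ≤ 0 := by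
        apply Finset.sum_nonpos
        intro γ hγ'
        have hγS' := Finset.mem_of_mem_erase hγ'
        have hγne : γ ≠ α := Finset.ne_of_mem_erase hγ'
        have hγΔ := C.subset hγS'
        have hγ0 := R.nonzero γ hγΔ
        obtain ⟨z, hz⟩ := R.crystallographic α hαΔ γ hγΔ
        have hzle : pairing α γ ≤ 0 := by
          have h20 := hX γ hγS' (fun hh => hγne hh.symm)
          rw [hz] at h20 ⊢
          have hz1 : z < 1 := by exact_mod_cast h20
          have hz2 : z ≤ 0 := by omega
          exact_mod_cast hz2
        have hγα : pairing γ α ≤ 0 := pairing_nonpos_flip hα0 hγ0 hzle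
        exact mul_nonpos_of_nonneg_of_nonpos (hd0 γ hγS') hγα
      have hsum_eq : ∑ γ ∈ C.S, d γ * pairing γ α = pairing (P.μ C) α + 1 := by
        rw [← hdsum, hid]
      have hsplit := Finset.sum_erase_add C.S (fun γ => d γ * pairing γ α) hαmem
      simp only [pairing_self hα0, hdα0, zero_mul, add_zero] at hsplit
      have hspec := hP C α hαmem
      rw [hsum_eq] at hsplit
      linarith
  · -- α not simple in C
    have hneγ1 : α ≠ γ1 := fun h => hαmem (h ▸ hγ1S)
    have hγ1Δ := C.subset hγ1S
    have hγ10 := R.nonzero γ1 hγ1Δ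
    have hβ0γ1 : β0 = γ1 := by
      by_contra hne'
      have := keyCross γ1 hγ1S hneγ1 hpγ1 β0 hβ0S hne'
      linarith
    subst hβ0γ1
    have hpγ1' : (1:ℝ) ≤ pairing β0 α := by
      have hpos : 0 < pairing β0 α :=
        pairing_pos_flip hα0 hγ10 (lt_of_lt_of_le zero_lt_one hpγ1)
      obtain ⟨z, hz⟩ := R.crystallographic β0 hγ1Δ α hαΔ
      rw [hz] at hpos ⊢
      have : 0 < z := by exact_mod_cast hpos
      have : 1 ≤ z := by omega
      exact_mod_cast this
    have hothers : ∀ γ ∈ C.S, γ ≠ β0 → pairing γ α ≤ 0 := by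
      intro γ hγ hne'
      have hγΔ := C.subset hγ
      have hγ0 := R.nonzero γ hγΔ
      have hαγ : pairing α γ ≤ 0 := by
        by_contra hpos
        push_neg at hpos
        obtain ⟨z, hz⟩ := R.crystallographic α hαΔ γ hγΔ
        have h1z : (1:ℝ) ≤ pairing α γ := by
          rw [hz] at hpos ⊢
          have : 0 < z := by exact_mod_cast hpos
          have : 1 ≤ z := by omega
          exact_mod_cast this
        have hαγne : α ≠ γ := fun h => hαmem (h ▸ hγ)
        have := keyCross γ hγ hαγne h1z β0 hγ1S hne'.symm
        linarith
      exact pairing_nonpos_flip hα0 hγ0 hαγ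
    have h2 : ∑ γ ∈ C.S, (n γ : ℝ) * pairing γ α = 2 := by
      rw [← pairing_sum_left, ← hnrep, pairing_self hα0]
    have hnsum : pairing (P.μ C - x) α = ∑ γ ∈ C.S, d γ * pairing γ α := hdsum
    have hdiff : ∑ γ ∈ C.S, (d γ - (n γ : ℝ)) * pairing γ α = pairing (P.μ C) α - 1 := by
      have h12 : ∀ γ ∈ C.S, (d γ - (n γ : ℝ)) * pairing γ α
          = d γ * pairing γ α - (n γ : ℝ) * pairing γ α := fun γ _ => by ring
      rw [Finset.sum_congr rfl h12, Finset.sum_sub_distrib, h2]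
      rw [hid] at hdsum
      linarith
    have hterm1 : (d β0 - (n β0 : ℝ)) * pairing β0 α ≤ -1 := by
      obtain ⟨mz, hmz⟩ := hdz β0 hγ1S
      have hle : d β0 - (n β0 : ℝ) ≤ -1 := by
        rw [hmz] at hβ0lt ⊢
        have : mz < n β0 := by exact_mod_cast hβ0lt
        have h21 : mz - n β0 ≤ -1 := by omega
        have h22 : ((mz - n β0 : ℤ) : ℝ) ≤ ((-1 : ℤ) : ℝ) := by exact_mod_cast h21
        push_cast at h22 ⊢
        linarith
      nlinarith
    have herase_le : ∑ γ ∈ C.S.erase β0, (d γ - (n γ : ℝ)) * pairing γ α ≤ 0 := by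
      apply Finset.sum_nonpos
      intro γ hγ'
      have hγS' := Finset.mem_of_mem_erase hγ'
      have hγne : γ ≠ β0 := Finset.ne_of_mem_erase hγ'
      have h13 := keyCross β0 hγ1S hneγ1 hpγ1 γ hγS' hγne
      exact mul_nonpos_of_nonneg_of_nonpos (by linarith) (hothers γ hγS' hγne)
    have hsplit := Finset.sum_erase_add C.S (fun γ => (d γ - (n γ : ℝ)) * pairing γ α) hγ1S
    have hμle : pairing (P.μ C) α ≤ 0 := by
      rw [← hsplit] at hdiff
      linarith
    have hμge : 0 ≤ pairing (P.μ C) α := special_pairing_nonneg P hP C hn0 hnrep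
    have hμ0 : pairing (P.μ C) α = 0 := le_antisymm hμle hμge
    obtain ⟨q1, hq1z⟩ := R.crystallographic α hαΔ β0 hγ1Δ
    obtain ⟨m, hm0, hmrep, hmsum⟩ := sBase_rep C hαΔ hγ1S hneγ1 hn0 hnrep hq1z
    obtain ⟨r, hrpos, hμr⟩ := ample_step P C hγ1S
    have hμ' : P.μ (sBase C (C.subset hγ1S)) = P.μ C - (r:ℝ) • β0 := by
      rw [← hμr]; abel
    have h14 : pairing (P.μ (sBase C (C.subset hγ1S))) α
        = pairing (P.μ C) α - (r:ℝ) * pairing β0 α := by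
      rw [hμ', pairing_sub_left, pairing_smul_left]
    have hspec'' : 0 ≤ pairing (P.μ (sBase C (C.subset hγ1S))) α :=
      special_pairing_nonneg P hP (sBase C (C.subset hγ1S)) hm0 hmrep
    have hr1 : (1:ℝ) ≤ (r:ℝ) := by exact_mod_cast hrpos
    nlinarith

end Aux7
section Final

set_option linter.unusedSectionVars false
set_option maxHeartbeats 1000000

variable {V : Type*} [NormedAddCommGroup V] [InnerProductSpace ℝ V] {R : RootSystemData V}
  [FiniteDimensional ℝ V]

lemma step_fwd (B : Base R) (P : AmplePolytope R) (hP : IsSpecial P) {x α : V}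
    (hαΔ : α ∈ R.Δ) (hx1 : pairing x α = -1) (hx : x ∈ latticePts P) :
    x + α ∈ latticePts P := by
  obtain ⟨hcar, hcoset⟩ := hx
  have hcon : ∀ C : Base R, Constr C (P.μ C - x) := fun C => constr_of_mem_carrier P C hcar
  have hcon' := master P hP hαΔ hcoset hx1 hcon
  constructor
  · apply mem_carrier_of_constr P B
    intro C
    have h1 := hcon' C
    have heq : P.μ C - (x + α) = P.μ C - x - α := by abel
    rwa [heq]
  · intro C
    have hαY : α ∈ rootLattice R := AddSubgroup.subset_closure hαΔ
    have h2 := (rootLattice R).add_mem (hcoset C) hαY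
    have heq : x - P.μ C + α = x + α - P.μ C := by abel
    rwa [heq] at h2

lemma step_iff (B : Base R) (P : AmplePolytope R) (hP : IsSpecial P) {x α : V}
    (hαΔ : α ∈ R.Δ) (hx1 : pairing x α = -1) :
    x ∈ latticePts P ↔ x + α ∈ latticePts P := by
  have hα0 : α ≠ 0 := R.nonzero α hαΔ
  constructor
  · exact step_fwd B P hP hαΔ hx1
  · intro hy
    have hnegΔ : -α ∈ R.Δ := R.neg_mem α hαΔ
    have hp : pairing (x + α) (-α) = -1 := by
      rw [pairing_neg_right, pairing_add_left, hx1, pairing_self hα0]; ring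
    have h3 := step_fwd B P hP hnegΔ hp hy
    rwa [show x + α + -α = x from by abel] at h3

end Final


/-- If `P` is a special ample polytope and `y` is obtained from a weight `x`
by playing the numbers game with a cutoff, then `x ∈ Λ(P)` iff `y ∈ Λ(P)`. -/
theorem stmt8 {V : Type*} [NormedAddCommGroup V] [InnerProductSpace ℝ V]
    [FiniteDimensional ℝ V] {R : RootSystemData V} (B : Base R)
    (P : AmplePolytope R) (hP : IsSpecial P) (x y : V) (hx : IsWeight R x)
    (hplay : ∃ l : List V, CutoffLegal B x l ∧ playRes x l = y) :
    x ∈ latticePts P ↔ y ∈ latticePts P := by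
  obtain ⟨l, hleg, hres⟩ := hplay
  induction l generalizing x with
  | nil =>
    simp only [playRes, List.foldl_nil] at hres
    rw [hres]
  | cons α t ih =>
    obtain ⟨hall, hαS, hneg, htail⟩ := hleg
    have hαΔ : α ∈ R.Δ := B.subset hαS
    have hα0 : α ≠ 0 := R.nonzero α hαΔ
    obtain ⟨z, hz⟩ := hx α hαΔ
    have hz1 : pairing x α = -1 := by
      have h1 : (z:ℝ) < 0 := by rw [← hz]; exact hneg
      have h2 : (-1:ℝ) ≤ (z:ℝ) := by rw [← hz]; exact hall α hαS
      have h3 : z < 0 := by exact_mod_cast h1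
      have h4 : -1 ≤ z := by exact_mod_cast h2
      have h5 : z = -1 := by omega
      rw [hz, h5]; norm_num
    have hfire : fireRoot x α = x + α := by
      rw [fireRoot, hz1, neg_one_smul, sub_neg_eq_add]
    have hx' : IsWeight R (x + α) := by
      intro β hβ
      obtain ⟨a, ha⟩ := hx β hβ
      obtain ⟨b, hb⟩ := R.crystallographic α hαΔ β hβ
      exact ⟨a + b, by rw [pairing_add_left, ha, hb]; push_cast; ring⟩
    rw [hfire] at htail
    have hres' : playRes (x + α) t = y := by
      rw [← hres]
      show List.foldl fireRoot (x + α) t = List.foldl fireRoot x (α :: t)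
      rw [List.foldl_cons, hfire]
    rw [step_iff B P hP hαΔ hz1]
    exact ih (x + α) hx' htail hres'
end

section
/- Let Φ be an irreducible reduced root system with a fixed choice of simple roots. If x is a dominant weight and α is a positive root such that playing the usual numbers game on ι(x + α) never fires a vertex corresponding to a simple root strictly shorter than α, then x + α is winning for the numbers game with a cutoff. In particular, if α is a short positive root and x is dominant, then x + α is winning. -/
open scoped BigOperators

variable {V : Type*} [NormedAddCommGroup V] [InnerProductSpace ℝ V]

variable {R : RootSystemData V}

section Aux

attribute [local instance] Classical.propDecidable

lemma pairing_add_left_s9 (x y z : V) : pairing (x + y) z = pairing x z + pairing y z := by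
  simp only [pairing, inner_add_left]; ring

/-- A positive root is never the negative of a simple root. -/
lemma pos_ne_neg_simple (B : Base R) {α γ : V} (hα : B.IsPos α) (hγ : γ ∈ B.S) :
    α ≠ -γ := by
  intro h
  obtain ⟨-, c, hc⟩ := hα
  have hsum : ∑ i : {x : V // x ∈ B.S},
      (((c i : ℝ) + if (i : V) = γ then 1 else 0) • (i : V)) = 0 := by
    rw [Finset.sum_coe_sort B.S (fun β => ((c β : ℝ) + if β = γ then 1 else 0) • β)]
    have h1 : ∑ β ∈ B.S, ((c β : ℝ) + if β = γ then 1 else 0) • β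
        = (∑ β ∈ B.S, (c β : ℝ) • β) + ∑ β ∈ B.S, (if β = γ then (1:ℝ) else 0) • β := by
      rw [← Finset.sum_add_distrib]
      exact Finset.sum_congr rfl fun β _ => by rw [add_smul]
    have h2 : ∑ β ∈ B.S, (if β = γ then (1:ℝ) else 0) • β = γ := by
      simp [ite_smul, Finset.sum_ite_eq', hγ]
    rw [h1, h2, ← hc, h]
    abel
  have := Fintype.linearIndependent_iff.mp B.indep
    (fun i => (c i : ℝ) + if (i : V) = γ then 1 else 0) hsum ⟨γ, hγ⟩
  simp at this
  have hcγ : (0:ℝ) ≤ (c γ : ℝ) := Nat.cast_nonneg _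
  linarith

/-- If `α, γ` are roots with `‖α‖ ≤ ‖γ‖` and `α ≠ -γ`, then `⟨α, γ^∨⟩ ≥ -1`. -/
lemma pairing_ge_neg_one {α γ : V} (hαΔ : α ∈ R.Δ) (hγΔ : γ ∈ R.Δ)
    (hne : α ≠ -γ) (hnorm : ‖α‖ ≤ ‖γ‖) : -1 ≤ pairing α γ := by
  by_contra hlt
  push_neg at hlt
  obtain ⟨n, hn⟩ := R.crystallographic α hαΔ γ hγΔ
  have hγ0 : γ ≠ 0 := R.nonzero γ hγΔ
  have hγpos : (0:ℝ) < ‖γ‖ := norm_pos_iff.mpr hγ0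
  have hγ2 : (inner ℝ γ γ : ℝ) = ‖γ‖ ^ 2 := real_inner_self_eq_norm_sq γ
  have hγ2ne : (inner ℝ γ γ : ℝ) ≠ 0 := by
    have hn : ‖γ‖ ≠ 0 := norm_ne_zero_iff.mpr hγ0
    rw [hγ2]; positivity
  have hn2 : (n : ℝ) ≤ -2 := by
    have h1 : (n : ℝ) < -1 := hn ▸ hlt
    have : n < -1 := by exact_mod_cast h1
    exact_mod_cast (by omega : n ≤ -2)
  have key : 2 * (inner ℝ α γ : ℝ) = n * (inner ℝ γ γ : ℝ) := by
    rw [pairing, div_eq_iff hγ2ne] at hn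
    linarith
  have hCS : -(‖α‖ * ‖γ‖) ≤ (inner ℝ α γ : ℝ) :=
    neg_le_of_abs_le (abs_real_inner_le_norm α γ)
  have h1 : (inner ℝ α γ : ℝ) ≤ -‖γ‖ ^ 2 := by nlinarith
  have h2 : ‖γ‖ ≤ ‖α‖ := by nlinarith
  have heq : ‖α‖ = ‖γ‖ := le_antisymm hnorm h2
  have hinnereq : (inner ℝ α γ : ℝ) = -(‖α‖ * ‖γ‖) := by nlinarith
  have hinner : (inner ℝ α (-γ) : ℝ) = ‖α‖ * ‖-γ‖ := by
    rw [inner_neg_right, norm_neg, hinnereq]; ring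
  have hpar : ‖-γ‖ • α = ‖α‖ • (-γ) := inner_eq_norm_mul_iff_real.mp hinner
  rw [norm_neg, heq, smul_neg] at hpar
  have hα_eq : α = -γ := by
    have := congrArg (fun v => (‖γ‖)⁻¹ • v) hpar
    simpa [smul_smul, inv_mul_cancel₀ (ne_of_gt hγpos)] using this
  exact hne hα_eq

lemma norm_add_root {α β : V} (hβ : β ≠ 0) (hp : pairing α β = -1) : ‖α + β‖ = ‖α‖ := by
  have hβ2 : (inner ℝ β β : ℝ) = ‖β‖ ^ 2 := real_inner_self_eq_norm_sq β
  have hβ2ne : (inner ℝ β β : ℝ) ≠ 0 := by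
    have hn : ‖β‖ ≠ 0 := norm_ne_zero_iff.mpr hβ
    rw [hβ2]; positivity
  have h2 : 2 * (inner ℝ α β : ℝ) = -(inner ℝ β β : ℝ) := by
    rw [pairing, div_eq_iff hβ2ne] at hp
    linarith
  have hsq : ‖α + β‖ ^ 2 = ‖α‖ ^ 2 := by
    rw [← real_inner_self_eq_norm_sq, ← real_inner_self_eq_norm_sq, inner_add_add_self]
    linarith [real_inner_comm β α]
  have h1 : (0:ℝ) ≤ ‖α + β‖ := norm_nonneg _
  have h2' : (0:ℝ) ≤ ‖α‖ := norm_nonneg _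
  nlinarith [sq_nonneg (‖α + β‖ - ‖α‖), sq_nonneg (‖α + β‖ + ‖α‖)]

lemma ngLegal_mem (B : Base R) :
    ∀ (l : List V) (x : V), NGLegal B x l → ∀ β ∈ l, β ∈ B.S := by
  intro l
  induction l with
  | nil => intro x _ β hβ; exact absurd hβ List.not_mem_nil
  | cons γ t ih =>
    intro x hleg β hβ
    obtain ⟨hγS, -, ht⟩ := hleg
    rcases List.mem_cons.mp hβ with h | h
    · exact h ▸ hγS
    · exact ih _ ht β h

/-- Main induction: play the numbers game, increasing the height of the root part. -/
lemma mainAux (B : Base R) (f : V →ₗ[ℝ] ℝ) (hf : ∀ β ∈ B.S, f β = 1) (M : ℝ)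
    (hM : ∀ γ ∈ R.Δ, f γ ≤ M) (x : V) (hx : IsWeight R x) (hxd : IsDominant B x) :
    ∀ n : ℕ, ∀ α : V, B.IsPos α → M - n < f α →
      (∀ l : List V, NGLegal B (x + α) l → ∀ β ∈ l, ‖α‖ ≤ ‖β‖) →
      CutoffWinning B (x + α) := by
  intro n
  induction n with
  | zero =>
    intro α hα hlt _
    exfalso
    have := hM α hα.1
    simp only [Nat.cast_zero, sub_zero] at hlt
    linarith
  | succ n ih =>
    intro α hα hlt hyp
    by_cases hdom : IsDominant B (x + α)
    · refine ⟨[], ?_, hdom⟩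
      show AllowedConf B (x + α)
      intro γ hγ
      linarith [hdom γ hγ]
    · -- there is a fireable simple root β
      rw [IsDominant] at hdom
      push_neg at hdom
      obtain ⟨β, hβS, hβneg⟩ := hdom
      have hβΔ : β ∈ R.Δ := B.subset hβS
      have hαΔ : α ∈ R.Δ := hα.1
      have hβ0 : β ≠ 0 := R.nonzero β hβΔ
      -- the fired root is at least as long as α
      have hnormβ : ‖α‖ ≤ ‖β‖ := hyp [β] ⟨hβS, hβneg, trivial⟩ β (List.mem_singleton.mpr rfl)
      have hne : α ≠ -β := pos_ne_neg_simple B hα hβS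
      have hm1 : -1 ≤ pairing α β := pairing_ge_neg_one hαΔ hβΔ hne hnormβ
      -- integrality forces the amplitudes
      obtain ⟨n₁, hn₁⟩ := hx β hβΔ
      obtain ⟨n₂, hn₂⟩ := R.crystallographic α hαΔ β hβΔ
      have hadd : pairing (x + α) β = (n₁ : ℝ) + (n₂ : ℝ) := by
        rw [pairing_add_left_s9, hn₁, hn₂]
      have hn₁0 : 0 ≤ n₁ := by exact_mod_cast hn₁ ▸ hxd β hβS
      have hn₂1 : -1 ≤ n₂ := by exact_mod_cast hn₂ ▸ hm1
      have hsum : n₁ + n₂ < 0 := by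
        have : (n₁ : ℝ) + (n₂ : ℝ) < 0 := hadd ▸ hβneg
        exact_mod_cast this
      have hn₁z : n₁ = 0 := by omega
      have hn₂z : n₂ = -1 := by omega
      have h0 : pairing x β = 0 := by rw [hn₁, hn₁z]; norm_num
      have h2 : pairing α β = -1 := by rw [hn₂, hn₂z]; norm_num
      -- firing β sends x + α to x + (α + β)
      have fire : fireRoot (x + α) β = x + (α + β) := by
        rw [fireRoot, pairing_add_left_s9, h0, h2, zero_add, neg_smul, one_smul,
          sub_neg_eq_add]
        abel
      -- α + β is a root
      have hαβΔ : α + β ∈ R.Δ := by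
        have := R.reflect_mem β hβΔ α hαΔ
        rwa [h2, neg_smul, one_smul, sub_neg_eq_add] at this
      -- α + β is positive
      have hαβpos : B.IsPos (α + β) := by
        obtain ⟨c, hc⟩ := hα.2
        refine ⟨hαβΔ, fun γ => c γ + if γ = β then 1 else 0, ?_⟩
        have h1 : ∑ γ ∈ B.S, ((c γ + if γ = β then 1 else 0 : ℕ) : ℝ) • γ
            = (∑ γ ∈ B.S, (c γ : ℝ) • γ) + ∑ γ ∈ B.S, (if γ = β then (1:ℝ) else 0) • γ := by
          rw [← Finset.sum_add_distrib]
          refine Finset.sum_congr rfl fun γ _ => ?_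
          rw [← add_smul]
          congr 1
          push_cast
          split <;> simp
        have h2' : ∑ γ ∈ B.S, (if γ = β then (1:ℝ) else 0) • γ = β := by
          simp [ite_smul, Finset.sum_ite_eq', hβS]
        rw [h1, h2', ← hc]
      -- norms preserved
      have hnorm' : ‖α + β‖ = ‖α‖ := norm_add_root hβ0 h2
      -- new height bound
      have hlt' : M - n < f (α + β) := by
        rw [map_add, hf β hβS]
        push_cast at hlt
        linarith
      -- new hypothesis about legal plays
      have hyp' : ∀ l : List V, NGLegal B (x + (α + β)) l → ∀ γ ∈ l, ‖α + β‖ ≤ ‖γ‖ := by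
        intro l hl γ hγ
        rw [hnorm']
        refine hyp (β :: l) ⟨hβS, hβneg, ?_⟩ γ (List.mem_cons_of_mem _ hγ)
        rwa [fire]
      obtain ⟨l, hleg, hwin⟩ := ih (α + β) hαβpos hlt' hyp'
      -- the initial configuration is allowed
      have hallowed : AllowedConf B (x + α) := by
        intro γ hγS
        by_cases hneg : pairing (x + α) γ < 0
        · have hγΔ : γ ∈ R.Δ := B.subset hγS
          have hnγ : ‖α‖ ≤ ‖γ‖ :=
            hyp [γ] ⟨hγS, hneg, trivial⟩ γ (List.mem_singleton.mpr rfl)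
          have := pairing_ge_neg_one hαΔ hγΔ (pos_ne_neg_simple B hα hγS) hnγ
          have hxγ := hxd γ hγS
          rw [pairing_add_left_s9]
          linarith
        · push_neg at hneg
          linarith
      refine ⟨β :: l, ⟨hallowed, hβS, hβneg, ?_⟩, ?_⟩
      · rwa [fire]
      · show IsDominant B (playRes (x + α) (β :: l))
        rw [playRes, List.foldl_cons, fire]
        exact hwin

end Aux

/-- If `x` is a dominant weight and `α` a positive root such that playing the
usual numbers game on `x + α` never fires a vertex corresponding to a simple root strictly
shorter than `α`, then `x + α` is winning for the numbers game with a cutoff.  In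
particular, if `α` is short (of minimal length among roots), the hypothesis is automatic
and `x + α` is winning. -/
theorem stmt9 {V : Type*} [NormedAddCommGroup V] [InnerProductSpace ℝ V]
    [FiniteDimensional ℝ V] {R : RootSystemData V} (B : Base R) (x α : V)
    (hx : IsWeight R x) (hxd : IsDominant B x) (hα : B.IsPos α) :
    ((∀ l : List V, NGLegal B (x + α) l → ∀ β ∈ l, ‖α‖ ≤ ‖β‖) →
      CutoffWinning B (x + α)) ∧
    ((∀ β ∈ R.Δ, ‖α‖ ≤ ‖β‖) → CutoffWinning B (x + α)) := by
  classical
  -- construct a height functional `f` with `f β = 1` for all simple roots `β`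
  let sS : Set V := ↑B.S
  have hli : LinearIndependent ℝ ((↑) : sS → V) := B.indep
  let b := Module.Basis.extend hli
  set f : V →ₗ[ℝ] ℝ := b.sumCoords with hfdef
  have hf : ∀ β ∈ B.S, f β = 1 := by
    intro β hβ
    have hβext : β ∈ (show LinearIndepOn ℝ id sS from hli).extend (Set.subset_univ sS) :=
      (show LinearIndepOn ℝ id sS from hli).subset_extend _ hβ
    have hb : b ⟨β, hβext⟩ = β := Module.Basis.extend_apply_self hli ⟨β, hβext⟩
    calc f β = b.sumCoords (b ⟨β, hβext⟩) := by rw [hb]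
      _ = 1 := b.sumCoords_self_apply ⟨β, hβext⟩
  -- upper bound for `f` on the finite set of roots
  obtain ⟨M, hM⟩ : ∃ M : ℝ, ∀ γ ∈ R.Δ, f γ ≤ M := by
    obtain ⟨M, hM⟩ := (R.finite.image f).bddAbove
    exact ⟨M, fun γ hγ => hM (Set.mem_image_of_mem f hγ)⟩
  have main : (∀ l : List V, NGLegal B (x + α) l → ∀ β ∈ l, ‖α‖ ≤ ‖β‖) →
      CutoffWinning B (x + α) := by
    intro hyp
    refine mainAux B f hf M hM x hx hxd (⌈M - f α⌉₊ + 1) α hα ?_ hyp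
    have h1 : M - f α ≤ (⌈M - f α⌉₊ : ℝ) := Nat.le_ceil _
    push_cast
    linarith
  refine ⟨main, fun hshort => main ?_⟩
  intro l hl β hβ
  exact hshort β (B.subset (ngLegal_mem B l (x + α) hl β hβ))
end
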